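/- Let Π be a simple Boolean MDDLog program over EDB schema S_E with IDB schema S_I, and let m be the maximum arity of relations in S_E. Then there exists a finite set S_Π of CSP templates over S_E such that: (1) Π is equivalent to coCSP(S_Π), i.e., for every S_E-instance I, I ⊨ Π iff there is no homomorphism from I to any T ∈ S_Π; and (2) |S_Π| ≤ 2^{|S_I|} and every T ∈ S_Π contains at most |S_E| · 2^{m·|S_I|} facts. -/

import Mathlib

namespace DDLogPaper

/-! ### Basic objects: constants, facts, schemas, instances, homomorphisms -/

/-- The fixed countably infinite set of constants. -/
abbrev Const := ℕ
/-- Variables. -/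
abbrev Var := ℕ
/-- Relation symbols. -/
abbrev RelSym := ℕ

/-- A fact: a relation symbol applied to a tuple of constants. -/
structure Fact where
  rel : RelSym
  args : List Const
deriving DecidableEq

/-- A schema: a finite set of relation symbols, each with an arity. -/
structure Schema where
  rels : Finset RelSym
  arity : RelSym → ℕ

/-- An instance is a finite set of facts. -/
abbrev Inst := Finset Fact

/-- `I` is an instance over schema `S`. -/
def Schema.IsInstance (S : Schema) (I : Inst) : Prop :=
  ∀ f ∈ I, f.rel ∈ S.rels ∧ f.args.length = S.arity f.rel

/-- The active domain of an instance. -/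
def adom (I : Inst) : Finset Const :=
  I.biUnion (fun f => f.args.toFinset)

/-- `h` is a homomorphism from `I` to `J`. -/
def IsHom (h : Const → Const) (I J : Inst) : Prop :=
  ∀ f ∈ I, (⟨f.rel, f.args.map h⟩ : Fact) ∈ J

/-- There is a homomorphism from `I` to `J`. -/
def HomTo (I J : Inst) : Prop := ∃ h, IsHom h I J

/-! ### Girth -/

/-- `I` has a cycle of length `n`: distinct facts `f 0, …, f (n-1)` with positions
`p i ≠ p' i` such that the constant of `f i` at position `p' i` equals the constant of
`f (i+1 mod n)` at position `p (i+1 mod n)`. -/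
def HasCycleOfLength (I : Inst) (n : ℕ) : Prop :=
  0 < n ∧
  ∃ (f : ℕ → Fact) (p p' : ℕ → ℕ),
    (∀ i < n, f i ∈ I) ∧
    (∀ i j, i < n → j < n → f i = f j → i = j) ∧
    (∀ i < n, p i ≠ p' i ∧ p i < (f i).args.length ∧ p' i < (f i).args.length) ∧
    (∀ i < n, (f i).args.getD (p' i) 0 = (f ((i + 1) % n)).args.getD (p ((i + 1) % n)) 0)

/-- The girth of `I` exceeds `g` (in particular this holds if `I` has no cycle at all). -/
def GirthGT (I : Inst) (g : ℕ) : Prop :=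
  ∀ n ≤ g, ¬ HasCycleOfLength I n

/-! ### Tree decompositions -/

/-- `I` has a tree decomposition with bags of size at most `k`, overlap of distinct bags of
size at most `ℓ`, and such that every bag contains all elements of `params`. -/
def HasTreeDecompWithParams (I : Inst) (params : Finset Const) (ℓ k : ℕ) : Prop :=
  ∃ (V : Type) (T : SimpleGraph V) (B : V → Finset Const),
    T.IsTree ∧
    (∀ v, B v ⊆ adom I ∪ params) ∧
    (∀ a ∈ adom I, (T.induce {v | a ∈ B v}).Connected) ∧
    (∀ f ∈ I, ∃ v, ∀ c ∈ f.args, c ∈ B v) ∧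
    (∀ v, params ⊆ B v) ∧
    (∀ v w, v ≠ w → (B v ∩ B w).card ≤ ℓ) ∧
    (∀ v, (B v).card ≤ k)

/-- `I` has treewidth `(ℓ,k)`: it admits an `(ℓ,k)`-tree decomposition. -/
def HasTreeDecomp (I : Inst) (ℓ k : ℕ) : Prop :=
  HasTreeDecompWithParams I ∅ ℓ k

/-! ### Terms, atoms, rules, programs -/

/-- A term is a variable or a constant. -/
inductive Term where
  | var : Var → Term
  | const : Const → Term
deriving DecidableEq

def Term.eval (v : Var → Const) : Term → Const
  | .var x => v x
  | .const c => c

def Term.varSet : Term → Finset Var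
  | .var x => {x}
  | .const _ => ∅

/-- An atom: a relation symbol applied to a tuple of terms. -/
structure Atom where
  rel : RelSym
  args : List Term
deriving DecidableEq

/-- Apply a valuation to an atom, obtaining a fact. -/
def Atom.app (a : Atom) (v : Var → Const) : Fact :=
  ⟨a.rel, a.args.map (Term.eval v)⟩

def Atom.vars (a : Atom) : Finset Var :=
  a.args.foldr (fun t s => t.varSet ∪ s) ∅

/-- The atom mentions no constants. -/
def Atom.constFree (a : Atom) : Prop :=
  ∀ t ∈ a.args, ∃ x, t = Term.var x

def Atom.size (a : Atom) : ℕ := 1 + a.args.length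

/-- The number of variable occurrences in an atom. -/
def Atom.varOccs (a : Atom) : ℕ :=
  (a.args.filter (fun t => match t with | Term.var _ => true | Term.const _ => false)).length

/-- A (disjunctive) rule: a disjunction of head atoms and a conjunction of body atoms. -/
structure Rule where
  head : List Atom
  body : List Atom
deriving DecidableEq

def Rule.atoms (ρ : Rule) : List Atom := ρ.head ++ ρ.body

def Rule.vars (ρ : Rule) : Finset Var :=
  ρ.atoms.foldr (fun a s => a.vars ∪ s) ∅

def Rule.bodyVars (ρ : Rule) : Finset Var :=
  ρ.body.foldr (fun a s => a.vars ∪ s) ∅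

/-- The rule holds in a set of facts `J` (all variables universally quantified). -/
def Rule.holdsIn (ρ : Rule) (J : Set Fact) : Prop :=
  ∀ v : Var → Const, (∀ a ∈ ρ.body, a.app v ∈ J) → ∃ a ∈ ρ.head, a.app v ∈ J

def Rule.size (ρ : Rule) : ℕ := 1 + (ρ.atoms.map Atom.size).sum

def Rule.bodyVarOccs (ρ : Rule) : ℕ := (ρ.body.map Atom.varOccs).sum

/-- A disjunctive Datalog program: a finite set of rules together with a selected goal
relation and its arity. -/
structure Program where
  rules : Finset Rule
  goal : RelSym
  goalArity : ℕ

/-- `P.models I t` formalizes `P ∪ I ⊨ goal(t)` (first-order entailment; by Herbrand's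
theorem for universal sentences it suffices to quantify over all sets of facts). -/
def Program.models (P : Program) (I : Inst) (t : List Const) : Prop :=
  ∀ J : Set Fact, (I : Set Fact) ⊆ J → (∀ ρ ∈ P.rules, ρ.holdsIn J) →
    (⟨P.goal, t⟩ : Fact) ∈ J

/-- The IDB relations of a program: the relations occurring in some rule head, together
with the goal relation. -/
def Program.IDB (P : Program) : Finset RelSym :=
  insert P.goal (P.rules.biUnion (fun ρ => (ρ.head.map Atom.rel).toFinset))

/-- `P` is a well-formed disjunctive Datalog program over EDB schema `S`. -/
def Program.IsDDLog (P : Program) (S : Schema) : Prop :=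
  (∀ r ∈ P.IDB, r ∉ S.rels) ∧
  ∀ ρ ∈ P.rules,
    ρ.body ≠ [] ∧
    (∀ a ∈ ρ.head, a.vars ⊆ ρ.bodyVars) ∧
    (∀ a ∈ ρ.body, a.rel ≠ P.goal) ∧
    ((∃ a ∈ ρ.head, a.rel = P.goal) → ρ.head.length = 1) ∧
    (∀ a ∈ ρ.atoms, a.rel = P.goal → a.args.length = P.goalArity) ∧
    (∀ a ∈ ρ.atoms, a.rel ∉ P.IDB → a.rel ∈ S.rels ∧ a.args.length = S.arity a.rel)

/-- Monadic disjunctive Datalog: all IDB relations except possibly goal have arity ≤ 1. -/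
def Program.IsMDDLog (P : Program) (S : Schema) : Prop :=
  P.IsDDLog S ∧
  ∀ ρ ∈ P.rules, ∀ a ∈ ρ.atoms, a.rel ∈ P.IDB → a.rel ≠ P.goal → a.args.length ≤ 1

/-- Datalog: every rule head consists of exactly one atom. -/
def Program.IsDatalog (P : Program) (S : Schema) : Prop :=
  P.IsDDLog S ∧ ∀ ρ ∈ P.rules, ρ.head.length = 1

/-- Monadic Datalog. -/
def Program.IsMDLog (P : Program) (S : Schema) : Prop :=
  P.IsDatalog S ∧
  ∀ ρ ∈ P.rules, ∀ a ∈ ρ.atoms, a.rel ∈ P.IDB → a.rel ≠ P.goal → a.args.length ≤ 1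

/-- The program mentions no constants. -/
def Program.constFree (P : Program) : Prop :=
  ∀ ρ ∈ P.rules, ∀ a ∈ ρ.atoms, a.constFree

/-- The size of a program (number of symbols needed to write it). -/
def Program.size (P : Program) : ℕ := ∑ ρ ∈ P.rules, ρ.size

/-- The diameter: the maximum number of variables occurring in a rule. -/
def Program.diameter (P : Program) : ℕ := P.rules.sup (fun ρ => ρ.vars.card)

/-- The rule size: the maximum number of variable occurrences in a rule body. -/
def Program.ruleSize (P : Program) : ℕ := P.rules.sup Rule.bodyVarOccs

def Atom.widthContrib (P : Program) (a : Atom) : ℕ :=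
  if a.rel ∈ P.IDB ∧ a.rel ≠ P.goal then a.args.length else 0

/-- The width: the maximum arity of non-goal IDB relations used in the program. -/
def Program.width (P : Program) : ℕ :=
  P.rules.sup (fun ρ => (ρ.atoms.map (Atom.widthContrib P)).foldr max 0)

/-- A simple MDDLog program: each rule has at most one EDB atom, which contains all
variables of the rule body, each exactly once; rules without an EDB atom have at most
one variable. -/
def Program.IsSimple (P : Program) : Prop :=
  ∀ ρ ∈ P.rules,
    (∀ a ∈ ρ.body, ∀ b ∈ ρ.body, a.rel ∉ P.IDB → b.rel ∉ P.IDB → a = b) ∧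
    (∀ a ∈ ρ.body, a.rel ∉ P.IDB →
      ∃ xs : List Var, a.args = xs.map Term.var ∧ xs.Nodup ∧ xs.toFinset = ρ.bodyVars) ∧
    ((∀ a ∈ ρ.body, a.rel ∈ P.IDB) → ρ.bodyVars.card ≤ 1)

/-! ### Datalog with parameters -/

/-- An `(ℓ,k)`-Datalog program with `n` parameters: an `n`-ary `(ℓ+n,k+n)`-Datalog program
in which all IDB relations have arity at least `n` and in every rule all IDB atoms
(including goal atoms) agree on the terms in their last `n` positions. -/
def Program.IsParamDatalog (Γ : Program) (S : Schema) (ℓ k n : ℕ) : Prop :=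
  Γ.IsDatalog S ∧ Γ.goalArity = n ∧
  Γ.width ≤ ℓ + n ∧ Γ.diameter ≤ k + n ∧
  (∀ ρ ∈ Γ.rules, ∀ a ∈ ρ.atoms, a.rel ∈ Γ.IDB → n ≤ a.args.length) ∧
  (∀ ρ ∈ Γ.rules, ∃ ys : List Term,
    ∀ a ∈ ρ.atoms, a.rel ∈ Γ.IDB → a.args.drop (a.args.length - n) = ys)

/-! ### Conjunctive queries and unions of conjunctive queries -/

/-- A conjunctive query: answer variables, relational atoms, and equality atoms. -/
structure CQ where
  answers : List Var
  atoms : List Atom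
  eqs : List (Var × Var)

/-- The CQ only uses relations from schema `S` (with correct arities) and no constants. -/
def CQ.over (q : CQ) (S : Schema) : Prop :=
  ∀ a ∈ q.atoms, a.rel ∈ S.rels ∧ a.args.length = S.arity a.rel ∧ a.constFree

/-- `t` is an answer to the CQ `q` on `I`. -/
def CQ.holds (q : CQ) (I : Inst) (t : List Const) : Prop :=
  ∃ h : Var → Const,
    (∀ a ∈ q.atoms, a.app h ∈ I) ∧
    (∀ e ∈ q.eqs, h e.1 = h e.2) ∧
    q.answers.map h = t

/-- A union of conjunctive queries is a finite list of CQs. -/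
abbrev UCQ := List CQ

def UCQHolds (u : UCQ) (I : Inst) (t : List Const) : Prop :=
  ∃ q ∈ u, q.holds I t

def UCQOver (u : UCQ) (S : Schema) (n : ℕ) : Prop :=
  ∀ q ∈ u, q.over S ∧ q.answers.length = n

def Term.toConst : Term → Const
  | .var x => x
  | .const c => c

/-- A CQ viewed as an instance (variables as constants). -/
def CQ.toInst (q : CQ) : Inst :=
  (q.atoms.map (fun a => (⟨a.rel, a.args.map Term.toConst⟩ : Fact))).toFinset

/-! ### First-order queries -/

/-- First-order formulas over a relational vocabulary, possibly with equality,
without constants and function symbols. -/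
inductive FO where
  | rel : RelSym → List Var → FO
  | eq : Var → Var → FO
  | neg : FO → FO
  | conj : FO → FO → FO
  | disj : FO → FO → FO
  | ex : Var → FO → FO
  | all : Var → FO → FO

/-- Evaluation of a first-order formula in an instance (active-domain quantification). -/
def FO.eval (I : Inst) : FO → (Var → Const) → Prop
  | .rel r xs, v => (⟨r, xs.map v⟩ : Fact) ∈ I
  | .eq x y, v => v x = v y
  | .neg φ, v => ¬ FO.eval I φ v
  | .conj φ ψ, v => FO.eval I φ v ∧ FO.eval I ψ v
  | .disj φ ψ, v => FO.eval I φ v ∨ FO.eval I ψ v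
  | .ex x φ, v => ∃ c ∈ adom I, FO.eval I φ (Function.update v x c)
  | .all x φ, v => ∀ c ∈ adom I, FO.eval I φ (Function.update v x c)

/-- The formula only uses relation symbols from `S`, with correct arities. -/
def FO.over (S : Schema) : FO → Prop
  | .rel r xs => r ∈ S.rels ∧ xs.length = S.arity r
  | .eq _ _ => True
  | .neg φ => FO.over S φ
  | .conj φ ψ => FO.over S φ ∧ FO.over S ψ
  | .disj φ ψ => FO.over S φ ∧ FO.over S ψ
  | .ex _ φ => FO.over S φ
  | .all _ φ => FO.over S φ

/-- Free variables of a first-order formula. -/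
def FO.free : FO → Finset Var
  | .rel _ xs => xs.toFinset
  | .eq x y => {x, y}
  | .neg φ => φ.free
  | .conj φ ψ => φ.free ∪ ψ.free
  | .disj φ ψ => φ.free ∪ ψ.free
  | .ex x φ => φ.free.erase x
  | .all x φ => φ.free.erase x

/-! ### Rewritings -/

/-- `φ` is an FO-rewriting of the (n-ary) program `P` over `S`
(answer variables are `0, …, n-1`). -/
def FOIsRewritingOf (φ : FO) (S : Schema) (P : Program) : Prop :=
  FO.over S φ ∧ φ.free ⊆ Finset.range P.goalArity ∧
  ∀ I : Inst, S.IsInstance I → ∀ t : List Const, t.length = P.goalArity →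
    (∀ c ∈ t, c ∈ adom I) → (FO.eval I φ (fun i => t.getD i 0) ↔ P.models I t)

/-- `u` is a UCQ-rewriting of the program `P` over `S`. -/
def UCQIsRewritingOf (u : UCQ) (S : Schema) (P : Program) : Prop :=
  UCQOver u S P.goalArity ∧
  ∀ I : Inst, S.IsInstance I → ∀ t : List Const, t.length = P.goalArity →
    (∀ c ∈ t, c ∈ adom I) → (UCQHolds u I t ↔ P.models I t)

/-- The program `Γ` is a rewriting of the program `P` over `S`. -/
def Program.IsRewritingOf (Γ : Program) (S : Schema) (P : Program) : Prop :=
  Γ.goalArity = P.goalArity ∧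
  ∀ I : Inst, S.IsInstance I → ∀ t : List Const, t.length = P.goalArity →
    (∀ c ∈ t, c ∈ adom I) → (Γ.models I t ↔ P.models I t)

/-- The program `Γ` is sound for the program `P` over `S`. -/
def Program.SoundFor (Γ : Program) (S : Schema) (P : Program) : Prop :=
  ∀ I : Inst, S.IsInstance I → ∀ t : List Const, t.length = P.goalArity →
    (∀ c ∈ t, c ∈ adom I) → Γ.models I t → P.models I t

/-! ### Boolean queries, CSPs -/

/-- The complement of the generalized CSP given by the set of templates `S`, as a
Boolean query: true on `I` iff `I` maps homomorphically to no template in `S`. -/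
def coCSP (S : Finset Inst) : Inst → Prop := fun I => ∀ T ∈ S, ¬ HomTo I T

/-- `φ` is an FO-definition (rewriting) of the Boolean query `Q` over `S`. -/
def IsFODefOf (φ : FO) (S : Schema) (Q : Inst → Prop) : Prop :=
  FO.over S φ ∧ φ.free = ∅ ∧ ∀ I : Inst, S.IsInstance I → (FO.eval I φ (fun _ => 0) ↔ Q I)

/-- `u` is a UCQ-definition (rewriting) of the Boolean query `Q` over `S`. -/
def IsUCQDefOf (u : UCQ) (S : Schema) (Q : Inst → Prop) : Prop :=
  UCQOver u S 0 ∧ ∀ I : Inst, S.IsInstance I → (UCQHolds u I [] ↔ Q I)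

/-- `Γ` is an MDLog-definition (rewriting) of the Boolean query `Q` over `S`. -/
def IsMDLogDefOf (Γ : Program) (S : Schema) (Q : Inst → Prop) : Prop :=
  Γ.IsMDLog S ∧ Γ.constFree ∧ Γ.goalArity = 0 ∧
  ∀ I : Inst, S.IsInstance I → (Γ.models I [] ↔ Q I)

/-- `Γ` is a Datalog-definition (rewriting) of the Boolean query `Q` over `S`. -/
def IsDLogDefOf (Γ : Program) (S : Schema) (Q : Inst → Prop) : Prop :=
  Γ.IsDatalog S ∧ Γ.constFree ∧ Γ.goalArity = 0 ∧
  ∀ I : Inst, S.IsInstance I → (Γ.models I [] ↔ Q I)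

/-! ### Aggregation schemas -/

/-- A `k`-aggregation schema for `SE`: every relation `R` is of the form `R_{q(x̄)}` for a
quantifier-free CQ `q(x̄)` over `SE` with at most `k` answer variables, the arity of `R`
being the number of answer variables of `q(x̄)`. -/
structure Aggregation (SE : Schema) (k : ℕ) where
  S : Schema
  q : RelSym → CQ
  wf : ∀ R ∈ S.rels,
    (q R).over SE ∧
    (q R).eqs = [] ∧
    (q R).answers.Nodup ∧
    (q R).answers.length = S.arity R ∧
    (q R).answers.length ≤ k ∧
    (∀ a ∈ (q R).atoms, a.vars ⊆ (q R).answers.toFinset)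

/-- `I'` is the `S'`-instance corresponding to the `SE`-instance `I`: it consists of all
facts `R_{q(x̄)}(ā)` with `I ⊨ q(ā)`. -/
def CorrUp {SE : Schema} {k : ℕ} (A : Aggregation SE k) (I I' : Inst) : Prop :=
  ∀ f : Fact, f ∈ I' ↔ (f.rel ∈ A.S.rels ∧ (A.q f.rel).holds I f.args)

/-- `I` is the `SE`-instance corresponding to the `S'`-instance `I'`: it consists of all
facts that occur as a conjunct of `q(ā)` for some fact `R_{q(x̄)}(ā) ∈ I'`. -/
def CorrDown {SE : Schema} {k : ℕ} (A : Aggregation SE k) (I' I : Inst) : Prop :=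
  ∀ g : Fact, g ∈ I ↔
    ∃ f ∈ I', ∃ h : Var → Const,
      (A.q f.rel).answers.map h = f.args ∧ ∃ a ∈ (A.q f.rel).atoms, Atom.app a h = g

/-! ### Equality -/

/-- The distinguished binary relation symbol `eq`. -/
def eqRel : RelSym := 0

/-- The schema contains the distinguished binary relation `eq`. -/
def HasEqualitySchema (S : Schema) : Prop := eqRel ∈ S.rels ∧ S.arity eqRel = 2

/-- A template has equality: it interprets `eq` as `{(a,a) | a ∈ adom T}`. -/
def TemplateHasEquality (T : Inst) : Prop :=
  ∀ a b : Const, ((⟨eqRel, [a, b]⟩ : Fact) ∈ T ↔ (a = b ∧ a ∈ adom T))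

def eqRuleFwd (R : RelSym) : Rule :=
  ⟨[⟨R, [Term.var 1]⟩], [⟨R, [Term.var 0]⟩, ⟨eqRel, [Term.var 0, Term.var 1]⟩]⟩

def eqRuleBwd (R : RelSym) : Rule :=
  ⟨[⟨R, [Term.var 0]⟩], [⟨R, [Term.var 1]⟩, ⟨eqRel, [Term.var 0, Term.var 1]⟩]⟩

/-- The extension `P^=` of `P` with the fresh EDB relation `eq` and the rules
`P(x) ∧ eq(x,y) → P(y)` and `P(y) ∧ eq(x,y) → P(x)` for each IDB relation `P`. -/
def Program.withEq (P : Program) : Program :=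
  ⟨P.rules ∪ (P.IDB.erase P.goal).biUnion (fun R => {eqRuleFwd R, eqRuleBwd R}),
   P.goal, P.goalArity⟩

/-! ### (1,k)-decompositions and decomposition girth -/

def partInst (I : Inst) (part : Fact → ℕ) (v : ℕ) : Inst :=
  I.filter (fun f => part f = v)

/-- `part` induces a `(1,k)`-decomposition of `I`: parts have active domains of size at
most `k`, distinct parts overlap in at most one constant. -/
def IsDecompOf (I : Inst) (part : Fact → ℕ) (k : ℕ) : Prop :=
  (∀ v ∈ I.image part, (adom (partInst I part v)).card ≤ k) ∧
  (∀ v w, v ∈ I.image part → w ∈ I.image part → v ≠ w →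
    ((adom (partInst I part v)) ∩ (adom (partInst I part w))).card ≤ 1)

/-- The instance over an aggregation schema induced by a decomposition: one fact per part,
whose arguments enumerate the active domain of the part (in a fixed order). -/
def decompInst (I : Inst) (part : Fact → ℕ) : Inst :=
  (I.image part).image
    (fun v => (⟨v, (adom (partInst I part v)).sort (· ≤ ·)⟩ : Fact))

/-- The `(1,k)`-decomposition girth of `I` exceeds `g`: some `(1,k)`-decomposition `D` of
`I` is such that the girth of `I_D` exceeds `g`. -/
def DecompGirthGT (I : Inst) (k g : ℕ) : Prop :=
  ∃ part : Fact → ℕ, IsDecompOf I part k ∧ GirthGT (decompInst I part) g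

/-! ### MMSNP -/

/-- An atom `X_i(x_j)` built from a monadic second-order variable. -/
structure SOAtom where
  pred : ℕ
  var : Var
deriving DecidableEq

/-- An implication `β₁ ∨ ⋯ ∨ βₙ ← α₁ ∧ ⋯ ∧ αₘ` of an MMSNP formula: the `β`s are
second-order atoms, the `α`s are second-order atoms or EDB atoms. -/
structure MMSNPImpl where
  headDisjuncts : List SOAtom
  bodySO : List SOAtom
  bodyEDB : List Fact
deriving DecidableEq

/-- An MMSNP formula `∃X₁⋯∃Xp ∀x₁⋯∀xm φ` with `freeVarCount` free first-order variables
(the variables `0, …, freeVarCount - 1`). -/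
structure MMSNP where
  freeVarCount : ℕ
  impls : List MMSNPImpl

def MMSNPOver (θ : MMSNP) (S : Schema) : Prop :=
  ∀ c ∈ θ.impls, ∀ f ∈ c.bodyEDB, f.rel ∈ S.rels ∧ f.args.length = S.arity f.rel

def MMSNPImpl.vars (c : MMSNPImpl) : Finset Var :=
  (c.headDisjuncts.map SOAtom.var).toFinset ∪ (c.bodySO.map SOAtom.var).toFinset ∪
    c.bodyEDB.foldr (fun f s => f.args.toFinset ∪ s) ∅

/-- The diameter of an MMSNP formula: the maximum number of variables in an implication. -/
def MMSNP.diameter (θ : MMSNP) : ℕ :=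
  (θ.impls.map (fun c => c.vars.card)).foldr max 0

/-- `I ⊨ θ[t]`: satisfaction of an MMSNP formula in an instance, with the free variables
`0, …, freeVarCount-1` interpreted by the tuple `t`. -/
def MMSNPSat (θ : MMSNP) (I : Inst) (t : List Const) : Prop :=
  ∃ X : ℕ → Set Const,
    ∀ v : Var → Const, (∀ x, v x ∈ adom I) → (∀ i < θ.freeVarCount, v i = t.getD i 0) →
      ∀ c ∈ θ.impls,
        ((∀ a ∈ c.bodySO, v a.var ∈ X a.pred) ∧
         (∀ f ∈ c.bodyEDB, (⟨f.rel, f.args.map v⟩ : Fact) ∈ I)) →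
        ∃ a ∈ c.headDisjuncts, v a.var ∈ X a.pred

section Statement2Aux

open scoped Classical

namespace S2

noncomputable section

def decT (c : Const) : Finset RelSym := ((Encodable.decode c : Option (Finset ℕ))).getD ∅

lemma decT_encode (t : Finset RelSym) : decT (Encodable.encode t) = t := by
  simp [decT, Encodable.encodek]

def atomSat (P : Program) (σ : Finset RelSym) (ν : Var → Finset RelSym) (a : Atom) : Prop :=
  a.rel ≠ P.goal ∧
    ((a.args = [] ∧ a.rel ∈ σ) ∨ ∃ x, a.args = [Term.var x] ∧ a.rel ∈ ν x)

def ruleSat (P : Program) (σ : Finset RelSym) (ν : Var → Finset RelSym) (ρ : Rule) : Prop :=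
  (∀ b ∈ ρ.body, b.rel ∈ P.IDB → atomSat P σ ν b) → ∃ a ∈ ρ.head, atomSat P σ ν a

def tok (P : Program) (σ t : Finset RelSym) : Prop :=
  ∀ ρ ∈ P.rules, (∀ b ∈ ρ.body, b.rel ∈ P.IDB) → ruleSat P σ (fun _ => t) ρ

def tySet (P : Program) (σ : Finset RelSym) : Finset (Finset RelSym) :=
  P.IDB.powerset.filter (tok P σ)

def tyCodes (P : Program) (σ : Finset RelSym) : Finset Const :=
  (tySet P σ).image Encodable.encode

def fok (P : Program) (σ : Finset RelSym) (f : Fact) : Prop :=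
  ∀ ρ ∈ P.rules, ∀ a0 ∈ ρ.body, a0.rel ∉ P.IDB → a0.rel = f.rel →
    ∀ xs : List Var, a0.args = xs.map Term.var →
      ruleSat P σ (fun x => decT (f.args.getD (xs.idxOf x) 0)) ρ

def tuples (s : Finset Const) : ℕ → Finset (List Const)
  | 0 => {[]}
  | n + 1 => (s ×ˢ tuples s n).image fun p => p.1 :: p.2

lemma mem_tuples {s : Finset Const} {n : ℕ} {cs : List Const} :
    cs ∈ tuples s n ↔ cs.length = n ∧ ∀ c ∈ cs, c ∈ s := by
  induction n generalizing cs with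
  | zero =>
    simp only [tuples, Finset.mem_singleton, List.length_eq_zero_iff]
    constructor
    · rintro rfl; simp
    · rintro ⟨rfl, -⟩; rfl
  | succ n ih =>
    cases cs with
    | nil =>
      simp [tuples]
    | cons c cs =>
      simp only [tuples, Finset.mem_image, Finset.mem_product, Prod.exists, List.length_cons,
        List.mem_cons]
      constructor
      · rintro ⟨a, b, ⟨ha, hb⟩, h⟩
        obtain ⟨rfl, rfl⟩ : a = c ∧ b = cs := by
          constructor <;> injection h
        rw [ih] at hb
        exact ⟨by omega, by rintro x (rfl | hx); exact ha; exact hb.2 x hx⟩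
      · rintro ⟨hl, hmem⟩
        exact ⟨c, cs, ⟨hmem c (Or.inl rfl), ih.2 ⟨by omega, fun x hx => hmem x (Or.inr hx)⟩⟩, rfl⟩

lemma card_tuples (s : Finset Const) (n : ℕ) : (tuples s n).card ≤ s.card ^ n := by
  induction n with
  | zero => simp [tuples]
  | succ n ih =>
    calc (tuples s (n+1)).card ≤ (s ×ˢ tuples s n).card := Finset.card_image_le
    _ = s.card * (tuples s n).card := Finset.card_product _ _
    _ ≤ s.card * s.card ^ n := Nat.mul_le_mul_left _ ih
    _ = s.card ^ (n+1) := by ring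

def tmpl (P : Program) (SE : Schema) (σ : Finset RelSym) : Inst :=
  SE.rels.biUnion fun R =>
    ((tuples (tyCodes P σ) (SE.arity R)).filter fun cs => fok P σ ⟨R, cs⟩).image
      fun cs => (⟨R, cs⟩ : Fact)

lemma mem_tmpl {P : Program} {SE : Schema} {σ : Finset RelSym} {f : Fact} :
    f ∈ tmpl P SE σ ↔ f.rel ∈ SE.rels ∧ f.args.length = SE.arity f.rel ∧
      (∀ c ∈ f.args, c ∈ tyCodes P σ) ∧ fok P σ f := by
  obtain ⟨R, args⟩ := f
  simp only [tmpl, Finset.mem_biUnion, Finset.mem_image, Finset.mem_filter, mem_tuples]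
  constructor
  · rintro ⟨R', hR', cs, ⟨⟨hlen, hmem⟩, hok⟩, h⟩
    obtain ⟨rfl, rfl⟩ : R' = R ∧ cs = args := by constructor <;> injection h
    exact ⟨hR', hlen, hmem, hok⟩
  · rintro ⟨hR, hlen, hmem, hok⟩
    exact ⟨R, hR, args, ⟨⟨hlen, hmem⟩, hok⟩, rfl⟩

def idx (P : Program) : Finset (Finset RelSym) :=
  P.IDB.powerset.filter fun σ => P.goal ∉ σ ∧ (tySet P σ).Nonempty

lemma mem_foldr_union {α : Type*} (g : α → Finset ℕ) (l : List α) (x : ℕ) :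
    x ∈ l.foldr (fun a s => g a ∪ s) ∅ ↔ ∃ a ∈ l, x ∈ g a := by
  induction l with
  | nil => simp
  | cons a l ih => simp [ih]

lemma mem_atom_vars {a : Atom} {x : Var} : x ∈ a.vars ↔ ∃ t ∈ a.args, x ∈ t.varSet :=
  mem_foldr_union _ _ _

lemma mem_bodyVars {ρ : Rule} {x : Var} : x ∈ ρ.bodyVars ↔ ∃ b ∈ ρ.body, x ∈ b.vars :=
  mem_foldr_union _ _ _

lemma atom_vars_subset_bodyVars {ρ : Rule} {b : Atom} (hb : b ∈ ρ.body) : b.vars ⊆ ρ.bodyVars :=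
  fun x hx => mem_bodyVars.2 ⟨b, hb, hx⟩

lemma var_mem_vars {a : Atom} {y : Var} (h : Term.var y ∈ a.args) : y ∈ a.vars :=
  mem_atom_vars.2 ⟨_, h, by simp [Term.varSet]⟩

lemma head_rel_mem_IDB {P : Program} {ρ : Rule} (hρ : ρ ∈ P.rules) {a : Atom}
    (ha : a ∈ ρ.head) : a.rel ∈ P.IDB :=
  Finset.mem_insert_of_mem <| Finset.mem_biUnion.2
    ⟨ρ, hρ, List.mem_toFinset.2 (List.mem_map.2 ⟨a, ha, rfl⟩)⟩


def bigJ (P : Program) (I : Inst) (σ : Finset RelSym) (τ : Const → Finset RelSym) : Set Fact :=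
  (↑I : Set Fact) ∪ {f | f.rel ∈ σ ∧ f.args = []} ∪
    {f | f.rel ∈ P.IDB ∧ ∃ a, f.args = [a] ∧ f.rel ∈ τ a}

lemma hom_gives_model (SE : Schema) (P : Program)
    (hP : P.IsMDDLog SE) (hcf : P.constFree) (hbool : P.goalArity = 0)
    (hsimple : P.IsSimple) {σ : Finset RelSym} (hσ : σ ∈ idx P)
    {I : Inst} (hI : SE.IsInstance I) {h : Const → Const}
    (hh : IsHom h I (tmpl P SE σ)) :
    ∃ J : Set Fact, (↑I : Set Fact) ⊆ J ∧ (∀ ρ ∈ P.rules, ρ.holdsIn J) ∧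
      (⟨P.goal, []⟩ : Fact) ∉ J := by
  classical
  obtain ⟨hdisj, hrules⟩ := hP.1
  have hmon := hP.2
  have hσ' := Finset.mem_filter.1 hσ
  have hσIDB : σ ⊆ P.IDB := Finset.mem_powerset.1 hσ'.1
  have hgσ : P.goal ∉ σ := hσ'.2.1
  obtain ⟨wt, hwt⟩ := hσ'.2.2
  set τ : Const → Finset RelSym :=
    fun a => if decT (h a) ∈ tySet P σ then decT (h a) else wt with hτ
  have τmem : ∀ a, τ a ∈ tySet P σ := by
    intro a; rw [hτ]; dsimp only; split_ifs with hd
    · exact hd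
    · exact hwt
  have τ2 : ∀ a t, t ∈ tySet P σ → h a = Encodable.encode t → τ a = t := by
    intro a t ht henc
    rw [hτ]; dsimp only; rw [henc, decT_encode, if_pos ht]
  refine ⟨bigJ P I σ τ, fun f hf => Or.inl (Or.inl hf), ?_, ?_⟩
  swap
  · rintro ((hf | hf) | hf)
    · exact hdisj P.goal (Finset.mem_insert_self _ _) (hI _ hf).1
    · exact hgσ hf.1
    · obtain ⟨a, ha, -⟩ := hf.2; exact absurd ha (by simp)
  intro ρ hρ v hbody
  obtain ⟨hne, hheadvars, hbodyg, hgh, hga, hedb⟩ := hrules ρ hρ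
  have key : ∀ ν : Var → Finset RelSym, (∀ x ∈ ρ.bodyVars, ν x = τ (v x)) →
      ruleSat P σ ν ρ → ∃ a ∈ ρ.head, a.app v ∈ bigJ P I σ τ := by
    intro ν hcompat hrs
    have hbs : ∀ b ∈ ρ.body, b.rel ∈ P.IDB → atomSat P σ ν b := by
      intro b hb hbIDB
      have hbJ := hbody b hb
      have hbg : b.rel ≠ P.goal := hbodyg b hb
      have hbatoms : b ∈ ρ.atoms := List.mem_append.2 (Or.inr hb)
      have hblen : b.args.length ≤ 1 := hmon ρ hρ b hbatoms hbIDB hbg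
      have hnotI : ∀ l : List Const, (⟨b.rel, l⟩ : Fact) ∉ (↑I : Set Fact) := by
        intro l hl; exact hdisj b.rel hbIDB (hI _ hl).1
      rcases Nat.le_one_iff_eq_zero_or_eq_one.1 hblen with h0 | h1
      · have hbargs : b.args = [] := List.length_eq_zero_iff.1 h0
        have happ : b.app v = ⟨b.rel, []⟩ := by simp [Atom.app, hbargs]
        rw [happ] at hbJ
        rcases hbJ with (hf | hf) | hf
        · exact absurd hf (hnotI _)
        · exact ⟨hbg, Or.inl ⟨hbargs, hf.1⟩⟩
        · obtain ⟨a, ha, -⟩ := hf.2; exact absurd ha (by simp)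
      · obtain ⟨t, hbargs⟩ := List.length_eq_one_iff.1 h1
        obtain ⟨y, rfl⟩ := hcf ρ hρ b hbatoms t (hbargs ▸ List.mem_singleton_self t)
        have happ : b.app v = ⟨b.rel, [v y]⟩ := by simp [Atom.app, hbargs, Term.eval]
        rw [happ] at hbJ
        have hy : y ∈ ρ.bodyVars :=
          atom_vars_subset_bodyVars hb (var_mem_vars (hbargs ▸ List.mem_singleton_self _))
        rcases hbJ with (hf | hf) | hf
        · exact absurd hf (hnotI _)
        · exact absurd hf.2 (by simp)
        · obtain ⟨-, a, ha, hmem⟩ := hf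
          have hav : v y = a := by simpa using ha
          subst hav
          exact ⟨hbg, Or.inr ⟨y, hbargs, (hcompat y hy) ▸ hmem⟩⟩
    obtain ⟨a1, ha1, hgoal1, hsat⟩ := hrs hbs
    refine ⟨a1, ha1, ?_⟩
    rcases hsat with ⟨hargs, hrelσ⟩ | ⟨x, hargs, hrelν⟩
    · exact Or.inl (Or.inr ⟨hrelσ, by simp [Atom.app, hargs]⟩)
    · have hx : x ∈ ρ.bodyVars :=
        hheadvars a1 ha1 (var_mem_vars (hargs ▸ List.mem_singleton_self _))
      have hmem : a1.rel ∈ τ (v x) := (hcompat x hx) ▸ hrelν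
      exact Or.inr ⟨head_rel_mem_IDB hρ ha1, v x, by simp [Atom.app, hargs, Term.eval], hmem⟩
  by_cases hE : ∃ a0 ∈ ρ.body, a0.rel ∉ P.IDB
  · obtain ⟨a0, ha0, hnI⟩ := hE
    obtain ⟨xs, hargs, hnodup, hcover⟩ := (hsimple ρ hρ).2.1 a0 ha0 hnI
    have hEDBJ := hbody a0 ha0
    have happ : a0.app v = ⟨a0.rel, xs.map v⟩ := by
      simp [Atom.app, hargs, List.map_map, Term.eval, Function.comp]
    have hfI : (⟨a0.rel, xs.map v⟩ : Fact) ∈ I := by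
      rw [happ] at hEDBJ
      rcases hEDBJ with (hf | hf) | hf
      · exact hf
      · exact absurd (hσIDB hf.1) hnI
      · exact absurd hf.1 hnI
    have htm := hh _ hfI
    rw [mem_tmpl] at htm
    obtain ⟨-, hlen, hcodes, hfok⟩ := htm
    have hcompat : ∀ x ∈ ρ.bodyVars,
        decT ((((xs.map v).map h : List Const)).getD (xs.idxOf x) 0) = τ (v x) := by
      intro x hx
      rw [← hcover] at hx
      have hxxs := List.mem_toFinset.1 hx
      have hi : xs.idxOf x < xs.length := List.idxOf_lt_length_iff.2 hxxs
      have hgetD : ((xs.map v).map h).getD (xs.idxOf x) 0 = h (v x) := by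
        rw [List.map_map, List.getD_eq_getElem _ _ (by simpa using hi), List.getElem_map,
          List.getElem_idxOf hi]
        rfl
      have hmemc : h (v x) ∈ tyCodes P σ :=
        hcodes _ (List.mem_map_of_mem (f := h) (List.mem_map_of_mem (f := v) hxxs))
      obtain ⟨t, ht, henc⟩ := Finset.mem_image.1 hmemc
      rw [hgetD]
      rw [τ2 (v x) t ht henc.symm, ← henc, decT_encode]
    exact key _ hcompat (hfok ρ hρ a0 ha0 hnI rfl xs hargs)
  · push_neg at hE
    have hb1 : ρ.bodyVars.card ≤ 1 := (hsimple ρ hρ).2.2 hE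
    by_cases h0 : ρ.bodyVars = ∅
    · refine key (fun _ => wt) ?_ ((Finset.mem_filter.1 hwt).2 ρ hρ hE)
      intro x hx; rw [h0] at hx; exact absurd hx (Finset.notMem_empty x)
    · obtain ⟨x0, hx0⟩ := Finset.nonempty_iff_ne_empty.2 h0
      refine key (fun _ => τ (v x0)) ?_ ((Finset.mem_filter.1 (τmem (v x0))).2 ρ hρ hE)
      intro x hx
      have hxx0 : x = x0 := Finset.card_le_one.1 hb1 x hx x0 hx0
      rw [hxx0]

lemma model_gives_hom (SE : Schema) (P : Program)
    (hP : P.IsMDDLog SE) (hcf : P.constFree) (hbool : P.goalArity = 0)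
    (hsimple : P.IsSimple) {I : Inst} (hI : SE.IsInstance I) {J : Set Fact}
    (hIJ : (↑I : Set Fact) ⊆ J) (hcl : ∀ ρ ∈ P.rules, ρ.holdsIn J)
    (hg : (⟨P.goal, []⟩ : Fact) ∉ J) :
    ∃ σ ∈ idx P, HomTo I (tmpl P SE σ) := by
  classical
  obtain ⟨hdisj, hrules⟩ := hP.1
  have hmon := hP.2
  set σ : Finset RelSym := P.IDB.filter (fun Q => (⟨Q, []⟩ : Fact) ∈ J) with hσdef
  set τ : Const → Finset RelSym :=
    fun a => P.IDB.filter (fun Q => (⟨Q, [a]⟩ : Fact) ∈ J) with hτdef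
  have key1 : ∀ ρ ∈ P.rules, ∀ (v : Var → Const) (ν : Var → Finset RelSym),
      (∀ x ∈ ρ.bodyVars, ν x = τ (v x)) →
      ∀ a1 ∈ ρ.head, a1.app v ∈ J → atomSat P σ ν a1 := by
    intro ρ hρ v ν hcompat a1 ha1 hJ1
    obtain ⟨hne, hheadvars, hbodyg, hgh, hga, hedb⟩ := hrules ρ hρ
    have hIDB1 : a1.rel ∈ P.IDB := head_rel_mem_IDB hρ ha1
    have h1atoms : a1 ∈ ρ.atoms := List.mem_append.2 (Or.inl ha1)
    by_cases hgoal : a1.rel = P.goal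
    · exfalso
      have hlen : a1.args.length = 0 := by rw [hga a1 h1atoms hgoal, hbool]
      have hargs : a1.args = [] := List.length_eq_zero_iff.1 hlen
      have : a1.app v = ⟨P.goal, []⟩ := by simp [Atom.app, hargs, hgoal]
      rw [this] at hJ1
      exact hg hJ1
    · refine ⟨hgoal, ?_⟩
      have hlen : a1.args.length ≤ 1 := hmon ρ hρ a1 h1atoms hIDB1 hgoal
      rcases Nat.le_one_iff_eq_zero_or_eq_one.1 hlen with h0 | h1
      · have hargs : a1.args = [] := List.length_eq_zero_iff.1 h0
        have : a1.app v = ⟨a1.rel, []⟩ := by simp [Atom.app, hargs]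
        rw [this] at hJ1
        exact Or.inl ⟨hargs, Finset.mem_filter.2 ⟨hIDB1, hJ1⟩⟩
      · obtain ⟨t, hargs⟩ := List.length_eq_one_iff.1 h1
        obtain ⟨y, rfl⟩ := hcf ρ hρ a1 h1atoms t (hargs ▸ List.mem_singleton_self t)
        have : a1.app v = ⟨a1.rel, [v y]⟩ := by simp [Atom.app, hargs, Term.eval]
        rw [this] at hJ1
        have hy : y ∈ ρ.bodyVars :=
          hheadvars a1 ha1 (var_mem_vars (hargs ▸ List.mem_singleton_self _))
        refine Or.inr ⟨y, hargs, ?_⟩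
        rw [hcompat y hy]
        exact Finset.mem_filter.2 ⟨hIDB1, hJ1⟩
  have key2 : ∀ (ρ : Rule) (v : Var → Const) (ν : Var → Finset RelSym) (b : Atom),
      b ∈ ρ.body → (∀ x ∈ ρ.bodyVars, ν x = τ (v x)) → atomSat P σ ν b → b.app v ∈ J := by
    rintro ρ v ν b hb hcompat ⟨hne, hsat⟩
    rcases hsat with ⟨hargs, hmem⟩ | ⟨y, hargs, hmem⟩
    · have := (Finset.mem_filter.1 hmem).2
      have happ : b.app v = ⟨b.rel, []⟩ := by simp [Atom.app, hargs]
      rwa [happ]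
    · have hy : y ∈ ρ.bodyVars :=
        atom_vars_subset_bodyVars hb (var_mem_vars (hargs ▸ List.mem_singleton_self _))
      rw [hcompat y hy] at hmem
      have := (Finset.mem_filter.1 hmem).2
      have happ : b.app v = ⟨b.rel, [v y]⟩ := by simp [Atom.app, hargs, Term.eval]
      rwa [happ]
  have tokτ : ∀ a : Const, τ a ∈ tySet P σ := by
    intro a
    refine Finset.mem_filter.2 ⟨Finset.mem_powerset.2 (Finset.filter_subset _ _), ?_⟩
    intro ρ hρ hallIDB hbodySat
    have hcompat : ∀ x ∈ ρ.bodyVars, (fun _ : Var => τ a) x = τ ((fun _ : Var => a) x) :=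
      fun _ _ => rfl
    have hbodyJ : ∀ b ∈ ρ.body, b.app (fun _ => a) ∈ J := fun b hb =>
      key2 ρ _ _ b hb hcompat (hbodySat b hb (hallIDB b hb))
    obtain ⟨a1, ha1, hJ1⟩ := hcl ρ hρ (fun _ => a) hbodyJ
    exact ⟨a1, ha1, key1 ρ hρ _ _ hcompat a1 ha1 hJ1⟩
  refine ⟨σ, ?_, fun a => Encodable.encode (τ a), ?_⟩
  · refine Finset.mem_filter.2 ⟨Finset.mem_powerset.2 (Finset.filter_subset _ _), ?_, τ 0, tokτ 0⟩
    intro hgmem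
    exact hg ((Finset.mem_filter.1 hgmem).2)
  · rintro ⟨R, as⟩ hf
    rw [mem_tmpl]
    obtain ⟨hR, hlenI⟩ := hI _ hf
    dsimp only at hR hlenI
    refine ⟨hR, by simpa using hlenI, ?_, ?_⟩
    · intro c hc
      obtain ⟨a, ha, rfl⟩ := List.mem_map.1 hc
      exact Finset.mem_image_of_mem _ (tokτ a)
    · intro ρ hρ a0 ha0 hnI hrel xs hxs
      obtain ⟨hne, hheadvars, hbodyg, hgh, hga, hedb⟩ := hrules ρ hρ
      obtain ⟨xs', hargs', hnodup', hcover'⟩ := (hsimple ρ hρ).2.1 a0 ha0 hnI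
      have hxseq : xs = xs' := by
        have hmapeq : xs.map Term.var = xs'.map Term.var := hxs ▸ hargs'
        exact List.map_injective_iff.2 (fun a b hab => by injection hab) hmapeq
      subst hxseq
      have hR0 : a0.rel = R := hrel
      have hlen0 : a0.args.length = SE.arity R := by
        have := (hedb a0 (List.mem_append.2 (Or.inr ha0)) hnI).2
        rwa [hR0] at this
      have hlenxs : xs.length = as.length := by
        rw [hxs] at hlen0
        simp only [List.length_map] at hlen0
        omega
      intro hbodySat
      set v : Var → Const := fun x => as.getD (xs.idxOf x) 0 with hv
      have hcompat : ∀ x ∈ ρ.bodyVars,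
          decT (((⟨R, as.map (fun a => Encodable.encode (τ a))⟩ : Fact)).args.getD
            (xs.idxOf x) 0) = τ (v x) := by
        intro x hx
        rw [← hcover'] at hx
        have hxxs := List.mem_toFinset.1 hx
        have hi : xs.idxOf x < xs.length := List.idxOf_lt_length_iff.2 hxxs
        have hi' : xs.idxOf x < as.length := by omega
        show decT ((as.map (fun a => Encodable.encode (τ a))).getD (xs.idxOf x) 0) = τ (v x)
        rw [List.getD_eq_getElem _ _ (by simpa using hi'), List.getElem_map, decT_encode]
        simp only [hv]
        rw [List.getD_eq_getElem _ _ hi']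
      have hbodyJ : ∀ b ∈ ρ.body, b.app v ∈ J := by
        intro b hb
        by_cases hbIDB : b.rel ∈ P.IDB
        · exact key2 ρ v _ b hb hcompat (hbodySat b hb hbIDB)
        · have hba : a0 = b := (hsimple ρ hρ).1 a0 ha0 b hb hnI hbIDB
          rw [← hba]
          have hmapeq : xs.map v = as := by
            apply List.ext_getElem (by simpa using hlenxs)
            intro i h1 h2
            simp only [List.getElem_map, hv]
            rw [List.Nodup.idxOf_getElem hnodup' i (by simpa using h1),
              List.getD_eq_getElem _ _ h2]
          have hev : Term.eval v ∘ Term.var = v := rfl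
          have happ : a0.app v = ⟨R, as⟩ := by
            simp [Atom.app, hxs, List.map_map, hev, hR0, hmapeq]
          rw [happ]
          exact hIJ hf
      obtain ⟨a1, ha1, hJ1⟩ := hcl ρ hρ v hbodyJ
      exact ⟨a1, ha1, key1 ρ hρ v _ hcompat a1 ha1 hJ1⟩
end

end S2

end Statement2Aux
end DDLogPaper

open DDLogPaper

/-- Thm. 3.2: translation of a simple Boolean MDDLog program into an
equivalent generalized CSP. -/
theorem statement_2 (SE : Schema) (P : Program)
    (hP : P.IsMDDLog SE) (hcf : P.constFree) (hbool : P.goalArity = 0)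
    (hsimple : P.IsSimple) :
    ∃ SP : Finset Inst,
      (∀ T ∈ SP, SE.IsInstance T) ∧
      (∀ I : Inst, SE.IsInstance I → (P.models I [] ↔ coCSP SP I)) ∧
      SP.card ≤ 2 ^ P.IDB.card ∧
      (∀ T ∈ SP, T.card ≤ SE.rels.card * 2 ^ ((SE.rels.sup SE.arity) * P.IDB.card)) := by
  classical
  refine ⟨(S2.idx P).image (fun σ => S2.tmpl P SE σ), ?_, ?_, ?_, ?_⟩
  · rintro T hT f hf
    obtain ⟨σ, hσ, rfl⟩ := Finset.mem_image.1 hT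
    have := S2.mem_tmpl.1 hf
    exact ⟨this.1, this.2.1⟩
  · intro I hI
    constructor
    · intro hm T hT hhom
      obtain ⟨σ, hσ, rfl⟩ := Finset.mem_image.1 hT
      obtain ⟨h, hh⟩ : ∃ h, IsHom h I (S2.tmpl P SE σ) := hhom
      obtain ⟨J, hIJ, hcl, hgJ⟩ := S2.hom_gives_model SE P hP hcf hbool hsimple hσ hI hh
      exact hgJ (hm J hIJ hcl)
    · intro hco J hIJ hcl
      by_contra hg
      obtain ⟨σ, hσ, hhom⟩ := S2.model_gives_hom SE P hP hcf hbool hsimple hI hIJ hcl hg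
      exact hco _ (Finset.mem_image_of_mem _ hσ) hhom
  · calc ((S2.idx P).image (fun σ => S2.tmpl P SE σ)).card
        ≤ (S2.idx P).card := Finset.card_image_le
      _ ≤ P.IDB.powerset.card := Finset.card_filter_le _ _
      _ = 2 ^ P.IDB.card := Finset.card_powerset _
  · intro T hT
    obtain ⟨σ, hσ, rfl⟩ := Finset.mem_image.1 hT
    have hty : (S2.tyCodes P σ).card ≤ 2 ^ P.IDB.card := by
      calc (S2.tyCodes P σ).card ≤ (S2.tySet P σ).card := Finset.card_image_le
        _ ≤ P.IDB.powerset.card := Finset.card_filter_le _ _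
        _ = 2 ^ P.IDB.card := Finset.card_powerset _
    calc (S2.tmpl P SE σ).card
        ≤ ∑ R ∈ SE.rels,
            (((S2.tuples (S2.tyCodes P σ) (SE.arity R)).filter
              (fun cs => S2.fok P σ ⟨R, cs⟩)).image (fun cs => (⟨R, cs⟩ : Fact))).card :=
          Finset.card_biUnion_le
      _ ≤ ∑ _R ∈ SE.rels, 2 ^ ((SE.rels.sup SE.arity) * P.IDB.card) := by
          refine Finset.sum_le_sum ?_
          intro R hR
          calc (((S2.tuples (S2.tyCodes P σ) (SE.arity R)).filter
                (fun cs => S2.fok P σ ⟨R, cs⟩)).image (fun cs => (⟨R, cs⟩ : Fact))).card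
              ≤ ((S2.tuples (S2.tyCodes P σ) (SE.arity R)).filter
                (fun cs => S2.fok P σ ⟨R, cs⟩)).card := Finset.card_image_le
            _ ≤ (S2.tuples (S2.tyCodes P σ) (SE.arity R)).card := Finset.card_filter_le _ _
            _ ≤ (S2.tyCodes P σ).card ^ (SE.arity R) := S2.card_tuples _ _
            _ ≤ (2 ^ P.IDB.card) ^ (SE.arity R) := Nat.pow_le_pow_left hty _
            _ = 2 ^ (P.IDB.card * SE.arity R) := (pow_mul 2 _ _).symm
            _ ≤ 2 ^ (P.IDB.card * SE.rels.sup SE.arity) :=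
                Nat.pow_le_pow_right (by norm_num)
                  (Nat.mul_le_mul_left _ (Finset.le_sup hR))
            _ = 2 ^ ((SE.rels.sup SE.arity) * P.IDB.card) := by rw [Nat.mul_comm]
      _ = SE.rels.card * 2 ^ ((SE.rels.sup SE.arity) * P.IDB.card) := by
          rw [Finset.sum_const, smul_eq_mul]
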